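/- For n ≥ 4, every triangulation of a convex n-gon contains at least two ears, i.e., at least two triangles each of which has two of its sides among the polygon sides (and only one diagonal side). -/

import Mathlib

namespace Polygon

/-- `x` lies strictly inside the arc from `a` to `b`, travelling in the
increasing cyclic direction around the convex `n`-gon `0, 1, …, n-1`. -/
def StrictBtw {n : ℕ} (a x b : Fin n) : Prop :=
  0 < (x - a).val ∧ (x - a).val < (b - a).val

/-- `e` is a side of the convex `n`-gon, i.e. an edge `{i, i+1 (mod n)}` (the successor taken cyclically). -/
def IsSide (n : ℕ) (e : Sym2 (Fin n)) : Prop :=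
  ∃ i j : Fin n, e = s(i, j) ∧ (j - i).val = 1

/-- `e` is a diagonal of the convex `n`-gon: it joins two distinct,
non-consecutive vertices. -/
def IsDiagonal (n : ℕ) (e : Sym2 (Fin n)) : Prop :=
  ¬ e.IsDiag ∧ ¬ IsSide n e

/-- Two chords of the polygon cross: their endpoints alternate strictly
around the cycle. -/
def Crosses {n : ℕ} (e f : Sym2 (Fin n)) : Prop :=
  ∃ a b c d : Fin n, e = s(a, b) ∧ f = s(c, d) ∧ StrictBtw a c b ∧ StrictBtw b d a

/-- A triangulation of the convex `n`-gon: a maximal set of pairwise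
noncrossing diagonals. -/
def IsTriangulation (n : ℕ) (T : Finset (Sym2 (Fin n))) : Prop :=
  (∀ e ∈ T, IsDiagonal n e) ∧
  (∀ e ∈ T, ∀ f ∈ T, ¬ Crosses e f) ∧
  (∀ e : Sym2 (Fin n), IsDiagonal n e → e ∉ T → ∃ f ∈ T, Crosses e f)

/-- A triangle of the triangulation `T`: a set of three vertices, each pair of
which is joined by a polygon side or a diagonal of `T` (for a convex polygon
these are exactly the triangles of the induced partition of the polygon). -/
def IsTriangleOf (n : ℕ) (T : Finset (Sym2 (Fin n))) (t : Finset (Fin n)) : Prop :=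
  t.card = 3 ∧ ∀ x ∈ t, ∀ y ∈ t, x ≠ y → (IsSide n s(x, y) ∨ s(x, y) ∈ T)

/-- The number of sides of the triangle `t` that are diagonals of the
triangulation `T`. -/
noncomputable def diagCount {n : ℕ} (T : Finset (Sym2 (Fin n))) (t : Finset (Fin n)) : ℕ :=
  {e : Sym2 (Fin n) | e ∈ t.sym2 ∧ ¬ e.IsDiag ∧ e ∈ T}.ncard

/-- The number of sides of the triangle `t` that are polygon sides. -/
noncomputable def sideCount (n : ℕ) (t : Finset (Fin n)) : ℕ :=
  {e : Sym2 (Fin n) | e ∈ t.sym2 ∧ IsSide n e}.ncard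

end Polygon

namespace EarProof
open Polygon
open Fin.CommRing

set_option linter.unusedSectionVars false
set_option linter.unusedVariables false

section withNeZero
variable {n : ℕ} [NeZero n]

lemma val_sub' (a b : Fin n) :
    (a - b).val = if b.val ≤ a.val then a.val - b.val else n + a.val - b.val := by
  have ha := a.isLt; have hb := b.isLt
  rw [Fin.sub_def]
  simp only []
  split
  · rw [Nat.mod_eq_sub_mod (by omega), Nat.mod_eq_of_lt (by omega)]; omega
  · rw [Nat.mod_eq_of_lt (by omega)]; omega

lemma val_add' (a b : Fin n) :
    (a + b).val = if a.val + b.val < n then a.val + b.val else a.val + b.val - n := by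
  have ha := a.isLt; have hb := b.isLt
  rw [Fin.add_def]
  simp only []
  split
  · exact Nat.mod_eq_of_lt (by omega)
  · rw [Nat.mod_eq_sub_mod (by omega), Nat.mod_eq_of_lt (by omega)]

lemma v1 (hn : 4 ≤ n) : (1 : Fin n).val = 1 := by
  rw [Fin.val_one']; exact Nat.mod_eq_of_lt (by omega)

lemma v2 (hn : 4 ≤ n) : (2 : Fin n).val = 2 := by
  have : ((2 : Fin n) : ℕ) = 2 % n := by
    rfl
  rw [this]; exact Nat.mod_eq_of_lt (by omega)

lemma sub_eq_zero_iff (a b : Fin n) : (a - b).val = 0 ↔ a = b := by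
  constructor
  · intro h
    exact sub_eq_zero.mp (Fin.ext (h.trans (Fin.val_zero n).symm))
  · rintro rfl; simp

lemma sub_add_sub (a b : Fin n) (hab : a ≠ b) : (a - b).val + (b - a).val = n := by
  have ha := a.isLt; have hb := b.isLt
  have h1 := val_sub' a b; have h2 := val_sub' b a
  have : a.val ≠ b.val := fun h => hab (Fin.ext h)
  split_ifs at h1 h2 <;> omega

lemma isSide_iff (hn : 4 ≤ n) (a b : Fin n) :
    IsSide n s(a, b) ↔ (b - a).val = 1 ∨ (a - b).val = 1 := by
  constructor
  · rintro ⟨i, j, he, hij⟩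
    rw [Sym2.eq_iff] at he
    rcases he with ⟨rfl, rfl⟩ | ⟨rfl, rfl⟩
    · exact Or.inl hij
    · exact Or.inr hij
  · rintro (h | h)
    · exact ⟨a, b, rfl, h⟩
    · exact ⟨b, a, Sym2.eq_swap.symm, h⟩

/-- basic bounds for a diagonal of the triangulation -/
lemma gap_bounds (hn : 4 ≤ n) {T : Finset (Sym2 (Fin n))} (hT : IsTriangulation n T)
    {p q : Fin n} (h : s(p, q) ∈ T) :
    2 ≤ (q - p).val ∧ (q - p).val + 2 ≤ n := by
  obtain ⟨hnd, hns⟩ := hT.1 _ h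
  have hpq : p ≠ q := by
    intro hh; exact hnd (by rw [Sym2.mk_isDiag_iff]; exact hh)
  have h0 : (q - p).val ≠ 0 := fun hh => hpq ((sub_eq_zero_iff q p).mp hh).symm
  have h0' : (p - q).val ≠ 0 := fun hh => hpq ((sub_eq_zero_iff p q).mp hh)
  have h1 : (q - p).val ≠ 1 ∧ (p - q).val ≠ 1 := by
    constructor <;> intro hh <;> exact hns ((isSide_iff hn p q).mpr (by tauto))
  have hsum := sub_add_sub q p hpq.symm
  omega

/-- From `(q-p).val = 2` conclude `q = p + 2`. -/
lemma eq_add_two (hn : 4 ≤ n) {p q : Fin n} (h : (q - p).val = 2) : q = p + 2 := by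
  have h2 : q - p = (2 : Fin n) := Fin.ext (by rw [h, v2 hn])
  have h3 := sub_eq_iff_eq_add.mp h2
  exact h3.trans (add_comm _ _)

/-- Key lemma: inside the (oriented) arc of any diagonal of `T` there is an "ear"
diagonal `s(c, c+2) ∈ T`. -/
lemma key (hn : 4 ≤ n) {T : Finset (Sym2 (Fin n))} (hT : IsTriangulation n T) :
    ∀ g : ℕ, ∀ p q : Fin n, s(p, q) ∈ T → (q - p).val ≤ g →
      ∃ c : Fin n, s(c, c + 2) ∈ T ∧ (c - p).val + 2 ≤ (q - p).val := by
  intro g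
  induction g with
  | zero =>
    intro p q hpq hle
    have := (gap_bounds hn hT hpq).1; omega
  | succ g IH =>
    intro p q hpq hle
    obtain ⟨hg2, hgn⟩ := gap_bounds hn hT hpq
    by_cases h2 : (q - p).val = 2
    · refine ⟨p, ?_, by simp [h2]⟩
      rwa [← eq_add_two hn h2]
    · -- gap ≥ 3
      have hG3 : 3 ≤ (q - p).val := by omega
      have hpq' : p ≠ q := by
        intro hh; subst hh; simp at hG3
      have hsum : (p - q).val + (q - p).val = n := sub_add_sub p q hpq'
      -- the chord from p+1 to q
      have hq1 : q - (p + 1) = (q - p) - 1 := by ring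
      have hv1 : (q - (p + 1)).val = (q - p).val - 1 := by
        rw [hq1, val_sub', v1 hn]
        split_ifs <;> omega
      have hq2 : (p + 1) - q = (p - q) + 1 := by ring
      have hv2 : ((p + 1) - q).val = (p - q).val + 1 := by
        rw [hq2, val_add', v1 hn]
        split_ifs <;> omega
      have hdiag : IsDiagonal n s(p + 1, q) := by
        constructor
        · rw [Sym2.mk_isDiag_iff]
          intro hh
          rw [hh] at hv1; simp at hv1; omega
        · rw [isSide_iff hn]
          rw [hv1, hv2]; omega
      by_cases heT : s(p + 1, q) ∈ T
      · obtain ⟨c, hc, hcle⟩ := IH (p + 1) q heT (by omega)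
        refine ⟨c, hc, ?_⟩
        have hcp : c - p = (c - (p + 1)) + 1 := by ring
        have hcpv : (c - p).val = (c - (p + 1)).val + 1 := by
          rw [hcp, val_add', v1 hn]
          split_ifs <;> omega
        omega
      · obtain ⟨f, hfT, a, b, u, v, hef, hfuv, hbtw1, hbtw2⟩ := hT.2.2 _ hdiag heT
        rw [Sym2.eq_iff] at hef
        have cont : ∀ u' v' : Fin n, s(u', v') ∈ T →
            StrictBtw (p + 1) u' q → StrictBtw q v' (p + 1) →
            ∃ c : Fin n, s(c, c + 2) ∈ T ∧ (c - p).val + 2 ≤ (q - p).val := by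
          intro u v huvT h1 h2'
          obtain ⟨h1a, h1b⟩ := h1
          obtain ⟨h2a, h2b⟩ := h2'
          rw [hv1] at h1b
          rw [hv2] at h2b
          have hup : (u - p).val = (u - (p + 1)).val + 1 := by
            have huu : u - p = (u - (p + 1)) + 1 := by ring
            rw [huu, val_add', v1 hn]
            split_ifs <;> omega
          by_cases hvp : v = p
          · rw [hvp] at huvT
            have hpu : s(p, u) ∈ T := by rwa [Sym2.eq_swap] at huvT
            obtain ⟨c, hc, hcle⟩ := IH p u hpu (by omega)
            exact ⟨c, hc, by omega⟩
          · exfalso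
            have hvq : (v - q).val < (p - q).val := by
              rcases Nat.lt_or_ge (v - q).val (p - q).val with h | h
              · exact h
              · exfalso
                have heq : (v - q).val = (p - q).val := by omega
                have : v - q = p - q := Fin.ext heq
                exact hvp (sub_left_inj.mp this)
            exact hT.2.1 _ hpq _ huvT
              ⟨p, q, u, v, rfl, rfl, ⟨by omega, by omega⟩, ⟨h2a, hvq⟩⟩
        rcases hef with ⟨ha, hb⟩ | ⟨ha, hb⟩
        · subst ha; subst hb
          exact cont u v (hfuv ▸ hfT) hbtw1 hbtw2
        · subst ha; subst hb
          exact cont v u (by rw [Sym2.eq_swap]; exact hfuv ▸ hfT) hbtw2 hbtw1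


lemma shift_sub_val (hn : 4 ≤ n) (c : Fin n) (k : Fin n) : ((c + k) - c).val = k.val := by
  have : c + k - c = k := by ring
  rw [this]

lemma ear_props (hn : 4 ≤ n) {T : Finset (Sym2 (Fin n))} (hT : IsTriangulation n T)
    (c : Fin n) (hc : s(c, c + 2) ∈ T) :
    IsTriangleOf n T {c, c + 1, c + 2} ∧ sideCount n {c, c + 1, c + 2} = 2 := by
  have h1 : ((c + 1) - c).val = 1 := by rw [shift_sub_val hn, v1 hn]
  have h2 : ((c + 2) - c).val = 2 := by rw [shift_sub_val hn, v2 hn]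
  have h21 : ((c + 2) - (c + 1)).val = 1 := by
    have : (c + 2) - (c + 1) = 1 := by ring
    rw [this, v1 hn]
  have h12 : ((c + 1) - (c + 2)).val = n - 1 := by
    have e : (c + 1) - (c + 2) = 0 - 1 := by ring
    rw [e, val_sub', v1 hn, Fin.val_zero]
    split_ifs <;> omega
  have h02 : (c - (c + 2)).val = n - 2 := by
    have hcc : c ≠ c + 2 := by
      intro hh
      have : ((c + 2) - c).val = 0 := by rw [← hh]; simp
      omega
    have := sub_add_sub c (c + 2) hcc
    omega
  have hne1 : c ≠ c + 1 := by
    intro hh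
    have : ((c + 1) - c).val = 0 := by rw [← hh]; simp
    omega
  have hne2 : c ≠ c + 2 := by
    intro hh
    have : ((c + 2) - c).val = 0 := by rw [← hh]; simp
    omega
  have hne3 : c + 1 ≠ c + 2 := by
    intro hh
    have : ((c + 2) - (c + 1)).val = 0 := by rw [← hh]; simp
    omega
  have hside1 : IsSide n s(c, c + 1) := ⟨c, c + 1, rfl, h1⟩
  have hside2 : IsSide n s(c + 1, c + 2) := ⟨c + 1, c + 2, rfl, h21⟩
  have hnotside02 : ¬ IsSide n s(c, c + 2) := by
    rw [isSide_iff hn, h2, h02]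
    omega
  have hnotdiag : ∀ x : Fin n, ¬ IsSide n s(x, x) := by
    intro x hx
    rw [isSide_iff hn] at hx
    simp at hx
  constructor
  · constructor
    · rw [Finset.card_insert_of_notMem (by simp [hne1, hne2]),
        Finset.card_insert_of_notMem (by simp [hne3])]
      simp
    · intro x hx y hy hxy
      simp only [Finset.mem_insert, Finset.mem_singleton] at hx hy
      rcases hx with rfl | rfl | rfl <;> rcases hy with rfl | rfl | rfl <;>
        first
          | exact absurd rfl hxy
          | exact Or.inl hside1
          | exact Or.inl (by rwa [Sym2.eq_swap])
          | exact Or.inl hside2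
          | exact Or.inr hc
          | exact Or.inr (by rwa [Sym2.eq_swap])
  · have hset : {e : Sym2 (Fin n) | e ∈ ({c, c + 1, c + 2} : Finset (Fin n)).sym2 ∧ IsSide n e}
        = {s(c, c + 1), s(c + 1, c + 2)} := by
      ext e
      induction e using Sym2.ind with
      | _ x y =>
        simp only [Set.mem_setOf_eq, Finset.mk_mem_sym2_iff, Finset.mem_insert,
          Finset.mem_singleton, Set.mem_insert_iff, Set.mem_singleton_iff]
        constructor
        · rintro ⟨⟨hx, hy⟩, hs⟩
          rcases hx with rfl | rfl | rfl <;> rcases hy with rfl | rfl | rfl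
          · exact absurd hs (hnotdiag _)
          · exact Or.inl rfl
          · exact absurd hs hnotside02
          · exact Or.inl Sym2.eq_swap
          · exact absurd hs (hnotdiag _)
          · exact Or.inr rfl
          · exact absurd (Sym2.eq_swap ▸ hs) hnotside02
          · exact Or.inr Sym2.eq_swap
          · exact absurd hs (hnotdiag _)
        · rintro (he | he) <;> rw [Sym2.eq_iff] at he <;>
            rcases he with ⟨rfl, rfl⟩ | ⟨rfl, rfl⟩
          · exact ⟨⟨Or.inl rfl, Or.inr (Or.inl rfl)⟩, hside1⟩
          · exact ⟨⟨Or.inr (Or.inl rfl), Or.inl rfl⟩, by rwa [Sym2.eq_swap]⟩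
          · exact ⟨⟨Or.inr (Or.inl rfl), Or.inr (Or.inr rfl)⟩, hside2⟩
          · exact ⟨⟨Or.inr (Or.inr rfl), Or.inr (Or.inl rfl)⟩, by rwa [Sym2.eq_swap]⟩
    rw [sideCount, hset, Set.ncard_pair]
    intro hh
    rw [Sym2.eq_iff] at hh
    rcases hh with ⟨hh, -⟩ | ⟨hh, -⟩
    · exact hne1 hh
    · exact hne2 hh

end withNeZero

open Polygon in
theorem two_ears_aux (n : ℕ) (hn : 4 ≤ n)
    (T : Finset (Sym2 (Fin n))) (hT : IsTriangulation n T) :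
    2 ≤ {t : Finset (Fin n) | IsTriangleOf n T t ∧ sideCount n t = 2}.ncard := by
  haveI : NeZero n := ⟨by omega⟩
  -- T is nonempty
  have hTne : T.Nonempty := by
    by_contra hemp
    rw [Finset.not_nonempty_iff_eq_empty] at hemp
    have hdiag : IsDiagonal n s((0 : Fin n), (2 : Fin n)) := by
      constructor
      · rw [Sym2.mk_isDiag_iff]
        intro hh
        have : ((2 : Fin n)).val = 0 := by rw [← hh]; simp
        rw [v2 hn] at this; omega
      · rw [isSide_iff hn]
        have e1 : ((2 : Fin n) - 0).val = 2 := by rw [sub_zero, v2 hn]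
        have e2 : ((0 : Fin n) - 2).val = n - 2 := by
          rw [val_sub', v2 hn, Fin.val_zero]
          split_ifs <;> omega
        omega
    obtain ⟨f, hf, -⟩ := hT.2.2 _ hdiag (by simp [hemp])
    simp [hemp] at hf
  obtain ⟨e, he⟩ := hTne
  revert he
  induction e using Sym2.ind with
  | _ a b =>
  intro he
  have he' : s(b, a) ∈ T := by rwa [Sym2.eq_swap] at he
  obtain ⟨hg2, hgn⟩ := gap_bounds hn hT he
  have hab : a ≠ b := by
    intro hh; subst hh
    have : (a - a).val = 0 := by simp
    omega
  have hsum : (a - b).val + (b - a).val = n := sub_add_sub a b hab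
  obtain ⟨c1, hc1T, hc1⟩ := key hn hT (b - a).val a b he le_rfl
  obtain ⟨c2, hc2T, hc2⟩ := key hn hT (a - b).val b a he' le_rfl
  obtain ⟨ht1, hs1⟩ := ear_props hn hT c1 hc1T
  obtain ⟨ht2, hs2⟩ := ear_props hn hT c2 hc2T
  set g := (b - a).val with hg
  -- distinctness of the two ears
  have hne : ({c1, c1 + 1, c1 + 2} : Finset (Fin n)) ≠ {c2, c2 + 1, c2 + 2} := by
    intro heq
    -- the middle vertex of the second ear lies in t1
    have hm2 : c2 + 1 ∈ ({c1, c1 + 1, c1 + 2} : Finset (Fin n)) := by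
      rw [heq]; simp
    -- compute (c2 + 1 - b).val
    have hmb : ((c2 + 1) - b).val = (c2 - b).val + 1 := by
      have e : (c2 + 1) - b = (c2 - b) + 1 := by ring
      rw [e, val_add', v1 hn]
      split_ifs <;> omega
    -- each element of t1 has small offset from a
    have hofs : ∀ x ∈ ({c1, c1 + 1, c1 + 2} : Finset (Fin n)), (x - a).val ≤ g := by
      intro x hx
      simp only [Finset.mem_insert, Finset.mem_singleton] at hx
      have e1 : ((c1 + 1) - a).val = (c1 - a).val + 1 := by
        have e : (c1 + 1) - a = (c1 - a) + 1 := by ring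
        rw [e, val_add', v1 hn]
        split_ifs <;> omega
      have e2 : ((c1 + 2) - a).val = (c1 - a).val + 2 := by
        have e : (c1 + 2) - a = (c1 - a) + 2 := by ring
        rw [e, val_add', v2 hn]
        split_ifs <;> omega
      rcases hx with rfl | rfl | rfl <;> omega
    have hle := hofs _ hm2
    -- but (c2+1 - a).val = (c2+1 - b).val + g > g
    have hrel : ((c2 + 1) - a).val = ((c2 + 1) - b).val + g := by
      have e : (c2 + 1) - a = ((c2 + 1) - b) + (b - a) := by ring
      rw [e, val_add', ← hg]
      split_ifs <;> omega
    omega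
  have m1 : ({c1, c1 + 1, c1 + 2} : Finset (Fin n)) ∈
      {t : Finset (Fin n) | IsTriangleOf n T t ∧ sideCount n t = 2} := ⟨ht1, hs1⟩
  have m2 : ({c2, c2 + 1, c2 + 2} : Finset (Fin n)) ∈
      {t : Finset (Fin n) | IsTriangleOf n T t ∧ sideCount n t = 2} := ⟨ht2, hs2⟩
  have : 1 < {t : Finset (Fin n) | IsTriangleOf n T t ∧ sideCount n t = 2}.ncard :=
    (Set.one_lt_ncard_iff (Set.toFinite _)).mpr ⟨_, _, m1, m2, hne⟩
  omega

end EarProof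

open Polygon in
/-- Every triangulation of a convex `n`-gon (`n ≥ 4`) has at least two ears:
triangles exactly two of whose sides are polygon sides (and only one diagonal side). -/
theorem triangulation_has_two_ears (n : ℕ) (hn : 4 ≤ n)
    (T : Finset (Sym2 (Fin n))) (hT : IsTriangulation n T) :
    2 ≤ {t : Finset (Fin n) | IsTriangleOf n T t ∧ sideCount n t = 2}.ncard := by
  exact EarProof.two_ears_aux n hn T hT
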